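/- arXiv:2510.06933 — 2 statements merged into one kernel-verified Lean document; each statement's English description precedes it below -/
import Mathlib

section
/- Let G be a graph of order n, e an edge of G, and α ∈ [1/2, 1]. Then for every 1 ≤ i ≤ n, the i-th largest eigenvalue of A_α(G) is at least the i-th largest eigenvalue of A_α(G − e), where G − e is obtained from G by deleting e. -/
/-- The `A_α`-matrix of a graph: `α·D(G) + (1-α)·A(G)`. -/
noncomputable def Aalpha {n : ℕ} (α : ℝ) (G : SimpleGraph (Fin n)) [DecidableRel G.Adj] :
    Matrix (Fin n) (Fin n) ℝ :=
  α • Matrix.diagonal (fun v => (G.degree v : ℝ)) + (1 - α) • G.adjMatrix ℝ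

lemma Aalpha_isHermitian {n : ℕ} (α : ℝ) (G : SimpleGraph (Fin n)) [DecidableRel G.Adj] :
    (Aalpha α G).IsHermitian := by
  apply Matrix.IsHermitian.ext
  intro i j
  by_cases h : G.Adj i j <;> by_cases hij : i = j <;>
    simp_all [Aalpha, Matrix.diagonal_apply, SimpleGraph.adj_comm, eq_comm]


/-- The `k`-th largest eigenvalue (1-indexed) of a Hermitian matrix. -/
noncomputable def eigDesc {n : ℕ} {M : Matrix (Fin n) (Fin n) ℝ} (hM : M.IsHermitian)
    (k : ℕ) : ℝ :=
  ((Finset.univ.val.map hM.eigenvalues).sort (· ≤ ·)).getD (n - k) 0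

open Finset
open scoped RealInnerProductSpace

section Sorted
variable {n : ℕ} {M : Matrix (Fin n) (Fin n) ℝ}

noncomputable def sortedEig (hM : M.IsHermitian) : Fin n → ℝ :=
  hM.eigenvalues ∘ Tuple.sort hM.eigenvalues

lemma sortedEig_monotone (hM : M.IsHermitian) : Monotone (sortedEig hM) :=
  Tuple.monotone_sort _

lemma sort_eig_eq (hM : M.IsHermitian) :
    (Finset.univ.val.map hM.eigenvalues).sort (· ≤ ·) = List.ofFn (sortedEig hM) := by
  refine (fun h a b => List.Perm.eq_of_pairwise' (r := (· ≤ ·)) a b h) ?_ ?_ ?_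
  · rw [← Multiset.coe_eq_coe, Multiset.sort_eq]
    have h1 : Multiset.map (Tuple.sort hM.eigenvalues) Finset.univ.val = Finset.univ.val := by
      conv_rhs => rw [← Finset.map_univ_equiv (Tuple.sort hM.eigenvalues)]
      rw [Finset.map_val]; rfl
    conv_lhs => rw [← h1, Multiset.map_map]
    rw [List.ofFn_eq_map]
    rfl
  · exact Multiset.pairwise_sort _ _
  · exact (sortedEig_monotone hM).sortedLE_ofFn.pairwise

lemma eigDesc_eq (hM : M.IsHermitian) {k : ℕ} (h1 : 1 ≤ k) (h2 : k ≤ n) :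
    eigDesc hM k = sortedEig hM ⟨n - k, by omega⟩ := by
  have h : n - k < (List.ofFn (sortedEig hM)).length := by simp; omega
  rw [eigDesc, sort_eig_eq, List.getD_eq_getElem _ _ h, List.getElem_ofFn]

end Sorted

section Quad
variable {n : ℕ} {M : Matrix (Fin n) (Fin n) ℝ}

lemma inner_toEuclideanLin_eq (M : Matrix (Fin n) (Fin n) ℝ) (x : EuclideanSpace ℝ (Fin n)) :
    ⟪x, Matrix.toEuclideanLin M x⟫ =
      dotProduct ((WithLp.equiv 2 (Fin n → ℝ)) x)
        (M.mulVec ((WithLp.equiv 2 (Fin n → ℝ)) x)) := by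
  simp [PiLp.inner_apply, Matrix.toEuclideanLin_apply, dotProduct, RCLike.inner_apply,
    mul_comm]

lemma toEuclideanLin_eigenvectorBasis (hM : M.IsHermitian) (i : Fin n) :
    Matrix.toEuclideanLin M (hM.eigenvectorBasis i) =
      hM.eigenvalues i • hM.eigenvectorBasis i := by
  apply (WithLp.equiv 2 _).injective
  rw [WithLp.equiv_apply, Matrix.ofLp_toEuclideanLin_apply]
  simpa using hM.mulVec_eigenvectorBasis i

lemma quad_repr (hM : M.IsHermitian) (x : EuclideanSpace ℝ (Fin n)) :
    ⟪x, Matrix.toEuclideanLin M x⟫ =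
      ∑ i, hM.eigenvalues i * (hM.eigenvectorBasis.repr x i)^2 := by
  set b := hM.eigenvectorBasis with hb
  rw [← b.sum_inner_mul_inner x (Matrix.toEuclideanLin M x)]
  apply Finset.sum_congr rfl
  intro i _
  have hsym := (Matrix.isHermitian_iff_isSymmetric.mp hM)
  have h1 : ⟪b i, Matrix.toEuclideanLin M x⟫ = ⟪Matrix.toEuclideanLin M (b i), x⟫ :=
    (hsym (b i) x).symm
  rw [h1, toEuclideanLin_eigenvectorBasis hM i, real_inner_smul_left,
    OrthonormalBasis.repr_apply_apply, real_inner_comm x (b i)]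
  ring

lemma inner_self_repr (hM : M.IsHermitian) (x : EuclideanSpace ℝ (Fin n)) :
    ⟪x, x⟫ = ∑ i, (hM.eigenvectorBasis.repr x i)^2 := by
  set b := hM.eigenvectorBasis with hb
  rw [← b.sum_inner_mul_inner x x]
  apply Finset.sum_congr rfl
  intro i _
  rw [OrthonormalBasis.repr_apply_apply, real_inner_comm x (b i)]
  ring

noncomputable def eigSpan (hM : M.IsHermitian) (S : Finset (Fin n)) :
    Submodule ℝ (EuclideanSpace ℝ (Fin n)) :=
  Submodule.span ℝ (⇑hM.eigenvectorBasis '' ↑S)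

lemma mem_eigSpan_iff (hM : M.IsHermitian) (S : Finset (Fin n))
    (x : EuclideanSpace ℝ (Fin n)) :
    x ∈ eigSpan hM S ↔ ∀ i ∉ S, hM.eigenvectorBasis.repr x i = 0 := by
  rw [eigSpan, ← hM.eigenvectorBasis.coe_toBasis, Module.Basis.mem_span_image]
  simp only [Finsupp.support_subset_iff, Finset.mem_coe,
    hM.eigenvectorBasis.coe_toBasis_repr_apply]

lemma finrank_eigSpan (hM : M.IsHermitian) (S : Finset (Fin n)) :
    Module.finrank ℝ (eigSpan hM S) = S.card := by
  classical
  have hinj : Function.Injective ⇑hM.eigenvectorBasis := by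
    rw [← hM.eigenvectorBasis.coe_toBasis]
    exact hM.eigenvectorBasis.toBasis.injective
  have hli0 : LinearIndependent ℝ
      ((↑) : (Set.range ⇑hM.eigenvectorBasis) → EuclideanSpace ℝ (Fin n)) := by
    have := (linearIndepOn_id_range_iff hinj).mpr hM.eigenvectorBasis.orthonormal.linearIndependent
    exact this
  have hli : LinearIndependent ℝ
      ((↑) : (⇑hM.eigenvectorBasis '' ↑S) → EuclideanSpace ℝ (Fin n)) :=
    LinearIndepOn.mono (v := id) hli0 (Set.image_subset_range _ _)
  rw [eigSpan, finrank_span_set_eq_card hli]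
  simp [Set.toFinset_image, Finset.card_image_of_injective _ hinj]

lemma quad_le_of_mem (hM : M.IsHermitian) (S : Finset (Fin n)) (c : ℝ)
    (hc : ∀ i ∈ S, hM.eigenvalues i ≤ c) (x : EuclideanSpace ℝ (Fin n))
    (hx : x ∈ eigSpan hM S) :
    ⟪x, Matrix.toEuclideanLin M x⟫ ≤ c * ⟪x, x⟫ := by
  rw [quad_repr hM, inner_self_repr hM, Finset.mul_sum]
  apply Finset.sum_le_sum
  intro i _
  by_cases hiS : i ∈ S
  · exact mul_le_mul_of_nonneg_right (hc i hiS) (sq_nonneg _)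
  · rw [(mem_eigSpan_iff hM S x).mp hx i hiS]
    simp

lemma le_quad_of_mem (hM : M.IsHermitian) (S : Finset (Fin n)) (c : ℝ)
    (hc : ∀ i ∈ S, c ≤ hM.eigenvalues i) (x : EuclideanSpace ℝ (Fin n))
    (hx : x ∈ eigSpan hM S) :
    c * ⟪x, x⟫ ≤ ⟪x, Matrix.toEuclideanLin M x⟫ := by
  rw [quad_repr hM, inner_self_repr hM, Finset.mul_sum]
  apply Finset.sum_le_sum
  intro i _
  by_cases hiS : i ∈ S
  · exact mul_le_mul_of_nonneg_right (hc i hiS) (sq_nonneg _)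
  · rw [(mem_eigSpan_iff hM S x).mp hx i hiS]
    simp

end Quad

section Graph
variable {n : ℕ}

lemma dot_mulVec_expand (M : Matrix (Fin n) (Fin n) ℝ) (x : Fin n → ℝ) :
    dotProduct x (M.mulVec x) = ∑ i, ∑ j, x i * (M i j * x j) := by
  simp [dotProduct, Matrix.mulVec, Finset.mul_sum]

lemma degree_eq_sum (G : SimpleGraph (Fin n)) [DecidableRel G.Adj] (i : Fin n) :
    (G.degree i : ℝ) = ∑ j, if G.Adj i j then (1:ℝ) else 0 := by
  rw [Finset.sum_boole]
  norm_cast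
  rw [SimpleGraph.degree]
  congr 1
  ext j
  simp [SimpleGraph.mem_neighborFinset]

lemma quad_Aalpha (α : ℝ) (G : SimpleGraph (Fin n)) [DecidableRel G.Adj] (x : Fin n → ℝ) :
    dotProduct x ((Aalpha α G).mulVec x) =
      ∑ i, ∑ j, (if G.Adj i j then (1:ℝ) else 0) * (α * x i ^ 2 + (1 - α) * (x i * x j)) := by
  rw [dot_mulVec_expand]
  apply Finset.sum_congr rfl
  intro i _
  have hM : ∀ j, Aalpha α G i j =
      (if i = j then α * (G.degree i : ℝ) else 0) + (1 - α) * (if G.Adj i j then 1 else 0) := by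
    intro j
    by_cases h : i = j
    · subst h; simp [Aalpha, Matrix.diagonal_apply]
    · simp [Aalpha, Matrix.diagonal_apply, h]
  have lhs_eq : ∑ j, x i * (Aalpha α G i j * x j)
      = (∑ j, x i * ((if i = j then α * (G.degree i : ℝ) else 0) * x j))
        + ∑ j, (if G.Adj i j then (1:ℝ) else 0) * ((1 - α) * (x i * x j)) := by
    rw [← Finset.sum_add_distrib]
    apply Finset.sum_congr rfl
    intro j _
    rw [hM j]
    by_cases h1 : i = j <;> by_cases h2 : G.Adj i j <;> simp [h1, h2] <;> ring
  rw [lhs_eq]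
  have hfirst : ∑ j, x i * ((if i = j then α * (G.degree i : ℝ) else 0) * x j)
      = α * (G.degree i : ℝ) * (x i * x i) := by
    rw [Finset.sum_eq_single i]
    · simp; ring
    · intro j _ hj; simp [Ne.symm hj, (by exact fun h => hj h.symm : ¬ i = j)]
    · intro h; exact absurd (Finset.mem_univ i) h
  rw [hfirst, degree_eq_sum]
  rw [mul_comm (α) (∑ j, if G.Adj i j then (1:ℝ) else 0), mul_assoc, Finset.sum_mul]
  rw [← Finset.sum_add_distrib]
  apply Finset.sum_congr rfl
  intro j _
  by_cases h2 : G.Adj i j <;>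
    simp only [h2, if_true, if_false, one_mul, zero_mul, zero_add, add_zero, mul_zero] <;> ring

lemma quad_diff (α : ℝ) (G : SimpleGraph (Fin n)) [DecidableRel G.Adj]
    (H : SimpleGraph (Fin n)) [DecidableRel H.Adj] (u v : Fin n)
    (huv : G.Adj u v) (hH : H = G.deleteEdges {s(u, v)}) (x : Fin n → ℝ) :
    dotProduct x ((Aalpha α G).mulVec x) =
      dotProduct x ((Aalpha α H).mulVec x) +
        ((α * x u ^ 2 + (1 - α) * (x u * x v)) + (α * x v ^ 2 + (1 - α) * (x v * x u))) := by
  have hne : u ≠ v := huv.ne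
  set φ : Fin n → Fin n → ℝ := fun i j => α * x i ^ 2 + (1 - α) * (x i * x j) with hφ
  have hsplit : ∀ i j, (if G.Adj i j then (1:ℝ) else 0)
      = (if H.Adj i j then 1 else 0) + (if s(i, j) = s(u, v) then 1 else 0) := by
    intro i j
    subst hH
    by_cases hij : s(i, j) = s(u, v)
    · have hG : G.Adj i j := by
        rw [← SimpleGraph.mem_edgeSet, hij]
        exact huv
      have hHn : ¬ (G.deleteEdges {s(u, v)}).Adj i j := by
        simp [SimpleGraph.deleteEdges_adj, hij]
      simp [hG, hHn, hij]
    · have : (G.deleteEdges {s(u, v)}).Adj i j ↔ G.Adj i j := by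
        simp [SimpleGraph.deleteEdges_adj, hij]
      by_cases hG : G.Adj i j <;> simp [hG, this, hij]
  rw [quad_Aalpha, quad_Aalpha]
  simp_rw [hsplit, add_mul, Finset.sum_add_distrib]
  congr 1
  have hrow : ∀ i, i ≠ u → i ≠ v →
      ∑ j, (if s(i, j) = s(u, v) then (1:ℝ) else 0) * φ i j = 0 := by
    intro i hiu hiv
    apply Finset.sum_eq_zero
    intro j _
    have : ¬ s(i, j) = s(u, v) := by
      rw [Sym2.eq_iff]
      push_neg
      exact ⟨fun h => absurd h hiu, fun h => absurd h hiv⟩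
    simp [this]
  have hsubset : ∑ i, ∑ j, (if s(i, j) = s(u, v) then (1:ℝ) else 0) * φ i j
      = ∑ i ∈ ({u, v} : Finset (Fin n)), ∑ j, (if s(i, j) = s(u, v) then (1:ℝ) else 0) * φ i j := by
    apply (Finset.sum_subset (Finset.subset_univ _) _).symm
    intro i _ hi
    simp only [Finset.mem_insert, Finset.mem_singleton] at hi
    push_neg at hi
    exact hrow i hi.1 hi.2
  rw [hsubset, Finset.sum_insert (by simp [hne]), Finset.sum_singleton]
  have hu : ∑ j, (if s(u, j) = s(u, v) then (1:ℝ) else 0) * φ u j = φ u v := by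
    rw [Finset.sum_eq_single v]
    · simp
    · intro j _ hj
      have : ¬ s(u, j) = s(u, v) := by
        rw [Sym2.eq_iff]
        push_neg
        exact ⟨fun _ => hj, fun h => absurd h.symm (Ne.symm hne)⟩
      simp [this]
    · intro h; exact absurd (Finset.mem_univ v) h
  have hv : ∑ j, (if s(v, j) = s(u, v) then (1:ℝ) else 0) * φ v j = φ v u := by
    rw [Finset.sum_eq_single u]
    · simp [Sym2.eq_swap]
    · intro j _ hj
      have : ¬ s(v, j) = s(u, v) := by
        rw [Sym2.eq_iff]
        push_neg
        exact ⟨fun h => absurd h hne.symm, fun _ => hj⟩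
      simp [this]
    · intro h; exact absurd (Finset.mem_univ u) h
  rw [hu, hv]

end Graph

lemma weyl_mono {n : ℕ} {A B : Matrix (Fin n) (Fin n) ℝ}
    (hA : A.IsHermitian) (hAB : (A + B).IsHermitian)
    (hB : ∀ x : Fin n → ℝ, 0 ≤ dotProduct x (B.mulVec x))
    {k : ℕ} (h1 : 1 ≤ k) (h2 : k ≤ n) :
    eigDesc hA k ≤ eigDesc hAB k := by
  have hn : n - k < n := by omega
  set j : Fin n := ⟨n - k, hn⟩ with hj
  rw [eigDesc_eq hA h1 h2, eigDesc_eq hAB h1 h2]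
  set SW : Finset (Fin n) := (Finset.Ici j).image (Tuple.sort hA.eigenvalues) with hSW
  set SU : Finset (Fin n) := (Finset.Iic j).image (Tuple.sort hAB.eigenvalues) with hSU
  have hWcard : SW.card = n - j.val := by
    rw [hSW, Finset.card_image_of_injective _ (Tuple.sort hA.eigenvalues).injective,
      Fin.card_Ici]
  have hUcard : SU.card = j.val + 1 := by
    rw [hSU, Finset.card_image_of_injective _ (Tuple.sort hAB.eigenvalues).injective,
      Fin.card_Iic]
  have hjval : j.val = n - k := rfl
  have hrank : 0 < Module.finrank ℝ
      ((eigSpan hA SW ⊓ eigSpan hAB SU : Submodule ℝ (EuclideanSpace ℝ (Fin n)))) := by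
    have h3 := Submodule.finrank_sup_add_finrank_inf_eq (eigSpan hA SW) (eigSpan hAB SU)
    have h4 : Module.finrank ℝ
        ((eigSpan hA SW ⊔ eigSpan hAB SU : Submodule ℝ (EuclideanSpace ℝ (Fin n)))) ≤ n := by
      refine le_trans (Submodule.finrank_le _) ?_
      simp [finrank_euclideanSpace]
    have h5 := finrank_eigSpan hA SW
    have h6 := finrank_eigSpan hAB SU
    omega
  have hnebot : (eigSpan hA SW ⊓ eigSpan hAB SU : Submodule ℝ (EuclideanSpace ℝ (Fin n))) ≠ ⊥ := by
    intro hbot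
    rw [hbot] at hrank
    simp at hrank
  obtain ⟨x, hx, hx0⟩ := Submodule.exists_mem_ne_zero_of_ne_bot hnebot
  have hxW : x ∈ eigSpan hA SW := (Submodule.mem_inf.mp hx).1
  have hxU : x ∈ eigSpan hAB SU := (Submodule.mem_inf.mp hx).2
  have key1 : sortedEig hA j * ⟪x, x⟫ ≤ ⟪x, Matrix.toEuclideanLin A x⟫ := by
    refine le_quad_of_mem hA SW _ ?_ x hxW
    intro i hi
    obtain ⟨i', hi', rfl⟩ := Finset.mem_image.mp hi
    exact sortedEig_monotone hA (Finset.mem_Ici.mp hi')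
  have key2 : ⟪x, Matrix.toEuclideanLin A x⟫ ≤ ⟪x, Matrix.toEuclideanLin (A + B) x⟫ := by
    have hadd : Matrix.toEuclideanLin (A + B) x
        = Matrix.toEuclideanLin A x + Matrix.toEuclideanLin B x := by
      rw [map_add]; rfl
    have hpos : 0 ≤ ⟪x, Matrix.toEuclideanLin B x⟫ := by
      rw [inner_toEuclideanLin_eq]; exact hB _
    rw [hadd, inner_add_right]
    linarith
  have key3 : ⟪x, Matrix.toEuclideanLin (A + B) x⟫ ≤ sortedEig hAB j * ⟪x, x⟫ := by
    refine quad_le_of_mem hAB SU _ ?_ x hxU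
    intro i hi
    obtain ⟨i', hi', rfl⟩ := Finset.mem_image.mp hi
    exact sortedEig_monotone hAB (Finset.mem_Iic.mp hi')
  have hxx : (0:ℝ) < ⟪x, x⟫ := by
    rcases lt_or_eq_of_le (real_inner_self_nonneg (x := x)) with h | h
    · exact h
    · exact absurd (inner_self_eq_zero.mp h.symm) hx0
  exact le_of_mul_le_mul_right (by linarith) hxx

lemma eigDesc_congr {n : ℕ} {M N : Matrix (Fin n) (Fin n) ℝ} (h : M = N)
    (hM : M.IsHermitian) (hN : N.IsHermitian) (k : ℕ) : eigDesc hM k = eigDesc hN k := by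
  subst h; rfl

/-- Edge-deletion monotonicity: for `α ∈ [1/2, 1]` and an edge `e` of `G`,
`λ_i(A_α(G)) ≥ λ_i(A_α(G − e))` for all `1 ≤ i ≤ n`. -/
theorem Aalpha_deleteEdge_monotone (n : ℕ) (G : SimpleGraph (Fin n)) [DecidableRel G.Adj]
    (e : Sym2 (Fin n)) (he : e ∈ G.edgeSet)
    (H : SimpleGraph (Fin n)) [DecidableRel H.Adj] (hH : H = G.deleteEdges {e})
    (α : ℝ) (hα0 : 1 / 2 ≤ α) (hα1 : α ≤ 1) :
    ∀ i : ℕ, 1 ≤ i → i ≤ n →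
      eigDesc (Aalpha_isHermitian α G) i ≥ eigDesc (Aalpha_isHermitian α H) i := by
  induction e using Sym2.ind with
  | _ u v =>
    intro i h1 h2
    have huv : G.Adj u v := (SimpleGraph.mem_edgeSet G).mp he
    set B := Aalpha α G - Aalpha α H with hB
    have hABeq : Aalpha α H + B = Aalpha α G := by rw [hB]; abel
    have hHerm : (Aalpha α H + B).IsHermitian := by
      rw [hABeq]; exact Aalpha_isHermitian α G
    have hPSD : ∀ x : Fin n → ℝ, 0 ≤ dotProduct x (B.mulVec x) := by
      intro x
      rw [hB, Matrix.sub_mulVec, dotProduct_sub]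
      have hq := quad_diff α G H u v huv hH x
      nlinarith [sq_nonneg (x u + x v), sq_nonneg (x u - x v)]
    have hmono := weyl_mono (Aalpha_isHermitian α H) hHerm hPSD h1 h2
    have hco : eigDesc hHerm i = eigDesc (Aalpha_isHermitian α G) i :=
      eigDesc_congr hABeq _ _ i
    rw [hco] at hmono
    exact hmono
end

section
/- If G is a connected graph of order n ≥ 3 with p pendant vertices and q quasi-pendant vertices, then the adjacency matrix A(G) has at least p eigenvalues in [0, Δ(G)] and at least p eigenvalues in [−√(⌈n/2⌉⌊n/2⌋), 0], counted with multiplicity. -/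
lemma adjMatrix_isHermitian {n : ℕ} (G : SimpleGraph (Fin n)) [DecidableRel G.Adj] :
    (G.adjMatrix ℝ).IsHermitian := by
  apply Matrix.IsHermitian.ext
  intro i j
  simp [SimpleGraph.adj_comm]

open Finset Matrix in
/-- walks stay in adjacency-closed sets -/
lemma walk_mem_closed {n : ℕ} {G : SimpleGraph (Fin n)} {s : Set (Fin n)}
    (hs : ∀ x y, x ∈ s → G.Adj x y → y ∈ s) :
    ∀ {a b : Fin n}, G.Walk a b → a ∈ s → b ∈ s := by
  intro a b p
  induction p with
  | nil => exact id
  | cons h q ih => exact fun ha => ih (hs _ _ ha h)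

open Finset Matrix in
lemma pendant_not_adj {n : ℕ} (hn : 3 ≤ n) {G : SimpleGraph (Fin n)} [DecidableRel G.Adj]
    (hconn : G.Connected) {v w : Fin n} (hv : G.degree v = 1) (hw : G.degree w = 1) :
    ¬ G.Adj v w := by
  intro hadj
  have hNv : G.neighborFinset v = {w} := by
    apply Finset.eq_singleton_iff_unique_mem.2
    refine ⟨by simpa using hadj, ?_⟩
    intro x hx
    have := Finset.card_le_one.1 (le_of_eq hv) x hx w (by simpa using hadj)
    exact this
  have hNw : G.neighborFinset w = {v} := by
    apply Finset.eq_singleton_iff_unique_mem.2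
    refine ⟨by simpa using hadj.symm, ?_⟩
    intro x hx
    have := Finset.card_le_one.1 (le_of_eq hw) x hx v (by simpa using hadj.symm)
    exact this
  -- there is a third vertex
  have hne : ((({v, w} : Finset (Fin n)))ᶜ).Nonempty := by
    rw [← Finset.card_pos, Finset.card_compl]
    have h2 : ({v, w} : Finset (Fin n)).card ≤ 2 :=
      (Finset.card_insert_le _ _).trans (by simp)
    simp only [Fintype.card_fin]
    omega
  obtain ⟨u, hu⟩ := hne
  rw [Finset.mem_compl] at hu
  have hclosed : ∀ x y : Fin n, x ∈ ({v, w} : Set (Fin n)) → G.Adj x y →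
      y ∈ ({v, w} : Set (Fin n)) := by
    rintro x y (rfl | rfl) hxy
    · have : y ∈ G.neighborFinset x := by simpa using hxy
      rw [hNv] at this
      simp at this
      simp [this]
    · have : y ∈ G.neighborFinset x := by simpa using hxy
      rw [hNw] at this
      simp at this
      simp [this]
  obtain ⟨p⟩ := hconn.preconnected v u
  have := walk_mem_closed hclosed p (by simp)
  simp at this hu
  tauto

lemma nat_prod_le_half {p q nn : ℕ} (h : p + q = nn) :
    p * q ≤ ((nn + 1) / 2) * (nn / 2) := by
  have h4 : 4 * (p * q) ≤ nn * nn := by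
    subst h
    rcases Nat.le_total p q with h' | h' <;> obtain ⟨d, rfl⟩ := Nat.le.dest h' <;> nlinarith
  rcases Nat.even_or_odd nn with ⟨k, hk⟩ | ⟨k, hk⟩
  · subst hk
    have h1 : (k + k + 1) / 2 = k := by omega
    have h2 : (k + k) / 2 = k := by omega
    rw [h1, h2]
    nlinarith
  · subst hk
    have h1 : (2 * k + 1 + 1) / 2 = k + 1 := by omega
    have h2 : (2 * k + 1) / 2 = k := by omega
    rw [h1, h2]
    nlinarith

open Finset Matrix in
lemma eig_abs_le_maxDegree {n : ℕ} (G : SimpleGraph (Fin n)) [DecidableRel G.Adj]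
    {x : Fin n → ℝ} {μ : ℝ} (hx : x ≠ 0) (hμ : G.adjMatrix ℝ *ᵥ x = μ • x) :
    |μ| ≤ (G.maxDegree : ℝ) := by
  have hne : ∃ j, x j ≠ 0 := by
    by_contra h
    push_neg at h
    exact hx (funext h)
  obtain ⟨j0, hj0⟩ := hne
  have huniv : (Finset.univ : Finset (Fin n)).Nonempty := ⟨j0, Finset.mem_univ _⟩
  obtain ⟨i, -, hi⟩ := Finset.exists_max_image Finset.univ (fun k => |x k|) huniv
  have hxi : 0 < |x i| := lt_of_lt_of_le (abs_pos.2 hj0) (hi j0 (Finset.mem_univ _))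
  have key : |μ| * |x i| ≤ (G.maxDegree : ℝ) * |x i| := by
    have h1 : |μ * x i| = |(G.adjMatrix ℝ *ᵥ x) i| := by rw [hμ]; simp [mul_comm]
    have h2 : (G.adjMatrix ℝ *ᵥ x) i = ∑ j ∈ G.neighborFinset i, x j :=
      SimpleGraph.adjMatrix_mulVec_apply _ _ _
    calc |μ| * |x i| = |μ * x i| := (abs_mul _ _).symm
      _ = |∑ j ∈ G.neighborFinset i, x j| := by rw [h1, h2]
      _ ≤ ∑ j ∈ G.neighborFinset i, |x j| := Finset.abs_sum_le_sum_abs _ _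
      _ ≤ ∑ _j ∈ G.neighborFinset i, |x i| :=
          Finset.sum_le_sum fun j _ => hi j (Finset.mem_univ _)
      _ = (G.degree i : ℝ) * |x i| := by
          rw [Finset.sum_const, nsmul_eq_mul]; rfl
      _ ≤ (G.maxDegree : ℝ) * |x i| := by
          apply mul_le_mul_of_nonneg_right _ (abs_nonneg _)
          exact_mod_cast G.degree_le_maxDegree i
  exact le_of_mul_le_mul_right key hxi

set_option maxHeartbeats 1000000 in
open Finset Matrix in
lemma eig_lower_bound {n : ℕ} (G : SimpleGraph (Fin n)) [DecidableRel G.Adj]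
    {x : Fin n → ℝ} {μ : ℝ} (hx1 : ∑ j, x j * x j = 1)
    (hμ : G.adjMatrix ℝ *ᵥ x = μ • x) :
    -Real.sqrt (((n + 1) / 2 : ℕ) * ((n / 2 : ℕ) : ℝ)) ≤ μ := by
  set M : ℝ := (((n + 1) / 2 : ℕ) * ((n / 2 : ℕ) : ℝ)) with hM
  rcases le_or_gt 0 μ with h0 | h0
  · exact le_trans (neg_nonpos.2 (Real.sqrt_nonneg _)) h0
  -- μ = xᵀ A x
  have hquad : μ = x ⬝ᵥ (G.adjMatrix ℝ *ᵥ x) := by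
    rw [hμ, dotProduct_smul, smul_eq_mul]
    rw [show x ⬝ᵥ x = ∑ j, x j * x j from rfl, hx1, mul_one]
  set P : Finset (Fin n) := Finset.univ.filter (fun i => 0 ≤ x i) with hP
  set N : Finset (Fin n) := Finset.univ.filter (fun i => ¬ 0 ≤ x i) with hN
  set a : ℝ := ∑ i ∈ P, x i with ha
  set b : ℝ := ∑ j ∈ N, (-(x j)) with hb
  have hanon : 0 ≤ a := Finset.sum_nonneg fun i hi => (Finset.mem_filter.1 hi).2
  have hbnon : 0 ≤ b := Finset.sum_nonneg fun j hj => by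
    have := (Finset.mem_filter.1 hj).2
    push_neg at this
    linarith
  -- expand quadratic form as double sum
  have hexp : x ⬝ᵥ (G.adjMatrix ℝ *ᵥ x) =
      ∑ i, ∑ j, x i * (G.adjMatrix ℝ i j * x j) := by
    simp only [dotProduct, mulVec, dotProduct, Finset.mul_sum]
  -- bound: quadratic form ≥ -2ab
  have hsplit : ∀ i : Fin n, ∑ j, x i * (G.adjMatrix ℝ i j * x j) =
      (∑ j ∈ P, x i * (G.adjMatrix ℝ i j * x j)) +
      (∑ j ∈ N, x i * (G.adjMatrix ℝ i j * x j)) := by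
    intro i
    rw [← Finset.sum_filter_add_sum_filter_not Finset.univ (fun j => 0 ≤ x j)]
  have hAnonneg : ∀ i j, (0:ℝ) ≤ G.adjMatrix ℝ i j := by
    intro i j; simp [SimpleGraph.adjMatrix_apply]; split <;> norm_num
  have hAle1 : ∀ i j, G.adjMatrix ℝ i j ≤ 1 := by
    intro i j; simp [SimpleGraph.adjMatrix_apply]; split <;> norm_num
  have hPP : (0:ℝ) ≤ ∑ i ∈ P, ∑ j ∈ P, x i * (G.adjMatrix ℝ i j * x j) := by
    apply Finset.sum_nonneg; intro i hi; apply Finset.sum_nonneg; intro j hj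
    have hxi := (Finset.mem_filter.1 hi).2
    have hxj := (Finset.mem_filter.1 hj).2
    have := hAnonneg i j
    positivity
  have hNN : (0:ℝ) ≤ ∑ i ∈ N, ∑ j ∈ N, x i * (G.adjMatrix ℝ i j * x j) := by
    apply Finset.sum_nonneg; intro i hi; apply Finset.sum_nonneg; intro j hj
    have hxi := (Finset.mem_filter.1 hi).2
    have hxj := (Finset.mem_filter.1 hj).2
    push_neg at hxi hxj
    rw [show x i * (G.adjMatrix ℝ i j * x j) = G.adjMatrix ℝ i j * (x i * x j) from by ring]
    exact mul_nonneg (hAnonneg i j) (by nlinarith)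
  have hPN : ∑ i ∈ P, ∑ j ∈ N, x i * (G.adjMatrix ℝ i j * x j) ≥
      ∑ i ∈ P, ∑ j ∈ N, x i * x j := by
    apply Finset.sum_le_sum; intro i hi; apply Finset.sum_le_sum; intro j hj
    have hxi := (Finset.mem_filter.1 hi).2
    have hxj := (Finset.mem_filter.1 hj).2
    push_neg at hxj
    have h1 := hAle1 i j
    nlinarith [mul_nonpos_iff.2 (Or.inl ⟨mul_nonneg hxi (sub_nonneg.2 h1), hxj.le⟩)]
  have hNP : ∑ i ∈ N, ∑ j ∈ P, x i * (G.adjMatrix ℝ i j * x j) ≥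
      ∑ i ∈ N, ∑ j ∈ P, x i * x j := by
    apply Finset.sum_le_sum; intro i hi; apply Finset.sum_le_sum; intro j hj
    have hxi := (Finset.mem_filter.1 hi).2
    have hxj := (Finset.mem_filter.1 hj).2
    push_neg at hxi
    have h1 := hAle1 i j
    nlinarith [mul_nonpos_iff.2 (Or.inl ⟨mul_nonneg hxj (sub_nonneg.2 h1), hxi.le⟩)]
  have hsum1 : ∑ i ∈ P, ∑ j ∈ N, x i * x j = -(a * b) := by
    rw [← Finset.sum_mul_sum]
    have : ∑ j ∈ N, x j = -b := by rw [hb, ← Finset.sum_neg_distrib]; ring_nf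
    rw [this]; ring
  have hsum2 : ∑ i ∈ N, ∑ j ∈ P, x i * x j = -(a * b) := by
    rw [← Finset.sum_mul_sum]
    have : ∑ j ∈ N, x j = -b := by rw [hb, ← Finset.sum_neg_distrib]; ring_nf
    rw [this]; ring
  have hmain : μ ≥ -(2 * (a * b)) := by
    have : x ⬝ᵥ (G.adjMatrix ℝ *ᵥ x) =
        (∑ i ∈ P, ∑ j ∈ P, x i * (G.adjMatrix ℝ i j * x j)) +
        (∑ i ∈ P, ∑ j ∈ N, x i * (G.adjMatrix ℝ i j * x j)) +
        ((∑ i ∈ N, ∑ j ∈ P, x i * (G.adjMatrix ℝ i j * x j)) +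
        (∑ i ∈ N, ∑ j ∈ N, x i * (G.adjMatrix ℝ i j * x j))) := by
      rw [hexp, ← Finset.sum_filter_add_sum_filter_not Finset.univ (fun i => 0 ≤ x i)]
      rw [show (Finset.univ.filter (fun i => 0 ≤ x i)) = P from rfl,
        show (Finset.univ.filter (fun i => ¬ 0 ≤ x i)) = N from rfl]
      rw [Finset.sum_congr (rfl : P = P) (fun i _ => hsplit i),
        Finset.sum_congr (rfl : N = N) (fun i _ => hsplit i),
        Finset.sum_add_distrib, Finset.sum_add_distrib]
    rw [hquad, this]
    have := hsum1 ▸ hPN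
    have := hsum2 ▸ hNP
    linarith
  -- Cauchy-Schwarz pieces
  have hcs1 : a ^ 2 ≤ (P.card : ℝ) * ∑ i ∈ P, x i ^ 2 := by
    have := sq_sum_le_card_mul_sum_sq (s := P) (f := x)
    exact_mod_cast this
  have hcs2 : b ^ 2 ≤ (N.card : ℝ) * ∑ j ∈ N, x j ^ 2 := by
    have h := sq_sum_le_card_mul_sum_sq (s := N) (f := fun j => -(x j))
    have h2 : ∑ j ∈ N, (-(x j)) ^ 2 = ∑ j ∈ N, x j ^ 2 :=
      Finset.sum_congr rfl fun j _ => by ring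
    rw [h2] at h
    exact_mod_cast h
  have hsP : (0:ℝ) ≤ ∑ i ∈ P, x i ^ 2 := Finset.sum_nonneg fun i _ => sq_nonneg _
  have hsN : (0:ℝ) ≤ ∑ j ∈ N, x j ^ 2 := Finset.sum_nonneg fun j _ => sq_nonneg _
  have hsum : (∑ i ∈ P, x i ^ 2) + (∑ j ∈ N, x j ^ 2) = 1 := by
    rw [Finset.sum_filter_add_sum_filter_not Finset.univ (fun i => 0 ≤ x i) (fun i => x i ^ 2)]
    simpa [pow_two] using hx1
  have hcardM : ((P.card * N.card : ℕ) : ℝ) ≤ M := by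
    rw [hM]
    have hpq : P.card + N.card = n := by
      rw [hP, hN, Finset.card_filter_add_card_filter_not]
      simp
    have := nat_prod_le_half hpq
    push_cast
    exact_mod_cast this
  have hsq : (2 * (a * b)) ^ 2 ≤ M := by
    have h4 : 4 * ((∑ i ∈ P, x i ^ 2) * (∑ j ∈ N, x j ^ 2)) ≤ 1 := by
      nlinarith [sq_nonneg ((∑ i ∈ P, x i ^ 2) - (∑ j ∈ N, x j ^ 2))]
    have hMnn : ((P.card : ℝ) * N.card) ≥ 0 := mul_nonneg (Nat.cast_nonneg _) (Nat.cast_nonneg _)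
    calc (2 * (a * b)) ^ 2 = 4 * (a ^ 2 * b ^ 2) := by ring
      _ ≤ 4 * (((P.card : ℝ) * ∑ i ∈ P, x i ^ 2) * ((N.card : ℝ) * ∑ j ∈ N, x j ^ 2)) := by
          nlinarith [sq_nonneg a, sq_nonneg b]
      _ = ((P.card : ℝ) * N.card) * (4 * ((∑ i ∈ P, x i ^ 2) * (∑ j ∈ N, x j ^ 2))) := by ring
      _ ≤ ((P.card : ℝ) * N.card) * 1 := by nlinarith
      _ ≤ M := by rw [mul_one]; exact_mod_cast hcardM
  have : 2 * (a * b) ≤ Real.sqrt M := Real.le_sqrt_of_sq_le hsq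
  linarith

open Matrix in
lemma sum_dotProduct' {ι : Type*} {n : ℕ} (s : Finset ι) (u : ι → (Fin n → ℝ)) (w : Fin n → ℝ) :
    (∑ i ∈ s, u i) ⬝ᵥ w = ∑ i ∈ s, (u i ⬝ᵥ w) := by
  simp only [dotProduct, Finset.sum_apply, Finset.sum_mul]
  exact Finset.sum_comm

open Matrix in
lemma dotProduct_sum' {ι : Type*} {n : ℕ} (s : Finset ι) (u : ι → (Fin n → ℝ)) (w : Fin n → ℝ) :
    w ⬝ᵥ (∑ i ∈ s, u i) = ∑ i ∈ s, (w ⬝ᵥ u i) := by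
  simp only [dotProduct, Finset.sum_apply, Finset.mul_sum]
  exact Finset.sum_comm

set_option maxHeartbeats 1000000 in
open Finset Matrix in
lemma aux_card {n : ℕ} {A : Matrix (Fin n) (Fin n) ℝ} (hA : A.IsHermitian)
    (P S : Finset (Fin n))
    (hP : ∀ x : Fin n → ℝ, (∀ j, j ∉ P → x j = 0) → x ⬝ᵥ (A *ᵥ x) = 0)
    (hS : ∀ c : {i // i ∈ S} → ℝ,
      (∑ i : {i // i ∈ S}, hA.eigenvalues i.1 * c i ^ 2) = 0 → ∀ i, c i = 0) :
    P.card + S.card ≤ n := by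
  classical
  set B := hA.eigenvectorBasis with hB
  have hBij : ∀ i j : Fin n, (⇑(B i) : Fin n → ℝ) ⬝ᵥ (⇑(B j)) = if i = j then 1 else 0 := by
    have horth := B.orthonormal
    rw [orthonormal_iff_ite] at horth
    intro i j
    have := horth i j
    simpa [PiLp.inner_apply, RCLike.inner_apply, dotProduct, mul_comm] using this
  set f : ({v // v ∈ P} ⊕ {i // i ∈ S}) → (Fin n → ℝ) :=
    (Sum.elim (fun v => (Pi.single (v.1 : Fin n) (1:ℝ) : Fin n → ℝ)) (fun i => (⇑(B i.1) : Fin n → ℝ))) with hf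
  have hli : LinearIndependent ℝ f := by
    rw [Fintype.linearIndependent_iff]
    intro g hg
    rw [Fintype.sum_sum_type] at hg
    set d : {v // v ∈ P} → ℝ := fun v => g (Sum.inl v) with hd
    set c : {i // i ∈ S} → ℝ := fun i => g (Sum.inr i) with hc
    set z : Fin n → ℝ := ∑ v : {v // v ∈ P}, d v • (Pi.single (v.1 : Fin n) (1:ℝ) : Fin n → ℝ) with hz
    set y : Fin n → ℝ := ∑ i : {i // i ∈ S}, c i • (⇑(B i.1) : Fin n → ℝ) with hy
    have hzy : z + y = 0 := by
      rw [hz, hy, ← hg]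
      rfl
    have hzsupp : ∀ j, j ∉ P → z j = 0 := by
      intro j hj
      rw [hz]
      rw [Finset.sum_apply]
      apply Finset.sum_eq_zero
      intro v _
      have : j ≠ (v.1 : Fin n) := by
        intro h; exact hj (h ▸ v.2)
      simp [Pi.single_apply, this]
    have hQz : z ⬝ᵥ (A *ᵥ z) = 0 := hP z hzsupp
    have hyz : y = -z := by
      have := hzy
      linear_combination (norm := module) this
    have hQy : y ⬝ᵥ (A *ᵥ y) = 0 := by
      rw [hyz]
      simp only [Matrix.mulVec_neg, neg_dotProduct, dotProduct_neg, neg_neg]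
      exact hQz
    -- compute quadratic form on y
    have hAy : A *ᵥ y = ∑ i : {i // i ∈ S}, c i • (hA.eigenvalues i.1 • (⇑(B i.1) : Fin n → ℝ)) := by
      rw [hy, ← Matrix.mulVecLin_apply, map_sum]
      apply Finset.sum_congr rfl
      intro i _
      rw [_root_.map_smul, Matrix.mulVecLin_apply, hA.mulVec_eigenvectorBasis]
    have hquadform : y ⬝ᵥ (A *ᵥ y) = ∑ i : {i // i ∈ S}, hA.eigenvalues i.1 * c i ^ 2 := by
      rw [hAy, hy, sum_dotProduct']
      have : ∀ i : {i // i ∈ S},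
          (c i • (⇑(B i.1) : Fin n → ℝ)) ⬝ᵥ
            (∑ j : {j // j ∈ S}, c j • (hA.eigenvalues j.1 • (⇑(B j.1) : Fin n → ℝ)))
          = hA.eigenvalues i.1 * c i ^ 2 := by
        intro i
        rw [dotProduct_sum']
        rw [Finset.sum_eq_single i]
        · rw [smul_dotProduct, dotProduct_smul, dotProduct_smul,
            hBij i.1 i.1, if_pos rfl]
          simp [smul_eq_mul]
          ring
        · intro j _ hji
          rw [smul_dotProduct, dotProduct_smul, dotProduct_smul,
            hBij i.1 j.1, if_neg (fun h => hji (Subtype.ext h).symm)]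
          simp
        · intro h
          exact absurd (Finset.mem_univ i) h
      rw [Finset.sum_congr rfl (fun i _ => this i)]
    have hczero : ∀ i, c i = 0 := hS c (by rw [← hquadform, hQy])
    have hyzero : y = 0 := by
      rw [hy]
      apply Finset.sum_eq_zero
      intro i _
      rw [hczero i, zero_smul]
    have hzzero : z = 0 := by
      have := hzy
      rw [hyzero, add_zero] at this
      exact this
    have hdzero : ∀ v, d v = 0 := by
      intro v
      have : z (v.1 : Fin n) = 0 := by rw [hzzero]; rfl
      rw [hz, Finset.sum_apply] at this
      rw [Finset.sum_eq_single v] at this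
      · simpa using this
      · intro w _ hwv
        have : (v.1 : Fin n) ≠ (w.1 : Fin n) := fun h => hwv (Subtype.ext h.symm)
        simp [Pi.single_apply, this.symm]
      · intro h
        exact absurd (Finset.mem_univ v) h
    intro k
    rcases k with v | i
    · exact hdzero v
    · exact hczero i
  have hcard := hli.fintype_card_le_finrank
  rw [Module.finrank_fintype_fun_eq_card, Fintype.card_fin] at hcard
  simpa [Fintype.card_sum, Fintype.card_coe] using hcard

open Matrix in
lemma eigBij {n : ℕ} {A : Matrix (Fin n) (Fin n) ℝ} (hA : A.IsHermitian) (i j : Fin n) :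
    (⇑(hA.eigenvectorBasis i) : Fin n → ℝ) ⬝ᵥ (⇑(hA.eigenvectorBasis j)) =
      if i = j then 1 else 0 := by
  have horth := hA.eigenvectorBasis.orthonormal
  rw [orthonormal_iff_ite] at horth
  have := horth i j
  simpa [PiLp.inner_apply, RCLike.inner_apply, dotProduct, mul_comm] using this

set_option maxHeartbeats 1000000 in
open Finset Matrix in
/-- If `G` is connected of order `n ≥ 3` with `p` pendant vertices, then the adjacency
matrix `A(G)` has at least `p` eigenvalues in `[0, Δ(G)]` and at least `p` eigenvalues in
`[−√(⌈n/2⌉⌊n/2⌋), 0]` (with multiplicity). -/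
theorem adjacency_pendant_eigenvalue_count (n : ℕ) (hn : 3 ≤ n)
    (G : SimpleGraph (Fin n)) [DecidableRel G.Adj] (hconn : G.Connected) :
    (univ.filter fun v : Fin n => G.degree v = 1).card ≤
      (univ.filter fun i : Fin n =>
        0 ≤ (adjMatrix_isHermitian G).eigenvalues i ∧
        (adjMatrix_isHermitian G).eigenvalues i ≤ (G.maxDegree : ℝ)).card ∧
    (univ.filter fun v : Fin n => G.degree v = 1).card ≤
      (univ.filter fun i : Fin n =>
        -Real.sqrt (((n + 1) / 2 : ℕ) * ((n / 2 : ℕ) : ℝ)) ≤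
          (adjMatrix_isHermitian G).eigenvalues i ∧
        (adjMatrix_isHermitian G).eigenvalues i ≤ 0).card := by
  classical
  have hA := adjMatrix_isHermitian G
  set lam : Fin n → ℝ := (adjMatrix_isHermitian G).eigenvalues with hlam
  set Pend : Finset (Fin n) := univ.filter fun v : Fin n => G.degree v = 1 with hPend
  -- quadratic form vanishes on pendant-supported vectors
  have hP : ∀ x : Fin n → ℝ, (∀ j, j ∉ Pend → x j = 0) →
      x ⬝ᵥ (G.adjMatrix ℝ *ᵥ x) = 0 := by
    intro x hx
    have hexp : x ⬝ᵥ (G.adjMatrix ℝ *ᵥ x) =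
        ∑ i, ∑ j, x i * (G.adjMatrix ℝ i j * x j) := by
      simp only [dotProduct, mulVec, dotProduct, Finset.mul_sum]
    rw [hexp]
    apply Finset.sum_eq_zero; intro i _
    apply Finset.sum_eq_zero; intro j _
    by_cases hxi : x i = 0
    · simp [hxi]
    by_cases hxj : x j = 0
    · simp [hxj]
    have hi : i ∈ Pend := by by_contra h; exact hxi (hx i h)
    have hj : j ∈ Pend := by by_contra h; exact hxj (hx j h)
    have hdi : G.degree i = 1 := (Finset.mem_filter.1 hi).2
    have hdj : G.degree j = 1 := (Finset.mem_filter.1 hj).2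
    have hnadj : ¬ G.Adj i j := pendant_not_adj hn hconn hdi hdj
    simp [SimpleGraph.adjMatrix_apply, hnadj]
  -- eigenvector facts
  have hBij := eigBij (adjMatrix_isHermitian G)
  have hunit : ∀ i : Fin n,
      ∑ j, (⇑((adjMatrix_isHermitian G).eigenvectorBasis i) : Fin n → ℝ) j *
        (⇑((adjMatrix_isHermitian G).eigenvectorBasis i) : Fin n → ℝ) j = 1 := by
    intro i
    have := hBij i i
    rw [if_pos rfl] at this
    simpa [dotProduct] using this
  have hne : ∀ i : Fin n, (⇑((adjMatrix_isHermitian G).eigenvectorBasis i) : Fin n → ℝ) ≠ 0 := by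
    intro i h
    have := hunit i
    rw [h] at this
    simp at this
  have hupper : ∀ i, lam i ≤ (G.maxDegree : ℝ) := by
    intro i
    have := eig_abs_le_maxDegree G (hne i)
      ((adjMatrix_isHermitian G).mulVec_eigenvectorBasis i)
    exact (abs_le.1 this).2
  have hlower : ∀ i, -Real.sqrt (((n + 1) / 2 : ℕ) * ((n / 2 : ℕ) : ℝ)) ≤ lam i := by
    intro i
    exact eig_lower_bound G (hunit i) ((adjMatrix_isHermitian G).mulVec_eigenvectorBasis i)
  -- the two "bad" sets
  set Sneg : Finset (Fin n) := univ.filter (fun i => ¬ 0 ≤ lam i) with hSneg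
  set Spos : Finset (Fin n) := univ.filter (fun i => ¬ lam i ≤ 0) with hSpos
  have hcard1 : Pend.card + Sneg.card ≤ n := by
    apply aux_card (adjMatrix_isHermitian G) Pend Sneg hP
    intro c hsum i
    have hneg : ∀ j : {j // j ∈ Sneg}, lam j.1 * c j ^ 2 ≤ 0 := by
      intro j
      have hx := (Finset.mem_filter.1 j.2).2
      push_neg at hx
      exact mul_nonpos_iff.2 (Or.inr ⟨hx.le, sq_nonneg _⟩)
    have h0 := (Finset.sum_eq_zero_iff_of_nonpos (fun j _ => hneg j)).1 hsum i (Finset.mem_univ i)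
    have hx := (Finset.mem_filter.1 i.2).2
    push_neg at hx
    rcases mul_eq_zero.1 h0 with h | h
    · exact absurd h (ne_of_lt hx)
    · exact pow_eq_zero_iff (by norm_num) |>.1 h
  have hcard2 : Pend.card + Spos.card ≤ n := by
    apply aux_card (adjMatrix_isHermitian G) Pend Spos hP
    intro c hsum i
    have hpos : ∀ j : {j // j ∈ Spos}, 0 ≤ lam j.1 * c j ^ 2 := by
      intro j
      have hx := (Finset.mem_filter.1 j.2).2
      push_neg at hx
      exact mul_nonneg hx.le (sq_nonneg _)
    have h0 := (Finset.sum_eq_zero_iff_of_nonneg (fun j _ => hpos j)).1 hsum i (Finset.mem_univ i)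
    have hx := (Finset.mem_filter.1 i.2).2
    push_neg at hx
    rcases mul_eq_zero.1 h0 with h | h
    · exact absurd h (ne_of_gt hx)
    · exact pow_eq_zero_iff (by norm_num) |>.1 h
  have hsplit1 : (univ.filter (fun i => 0 ≤ lam i)).card + Sneg.card = n := by
    rw [hSneg, Finset.card_filter_add_card_filter_not]
    simp
  have hsplit2 : (univ.filter (fun i => lam i ≤ 0)).card + Spos.card = n := by
    rw [hSpos, Finset.card_filter_add_card_filter_not]
    simp
  constructor
  · have heq : (univ.filter fun i : Fin n => 0 ≤ lam i ∧ lam i ≤ (G.maxDegree : ℝ)) =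
        univ.filter (fun i => 0 ≤ lam i) := by
      apply Finset.filter_congr
      intro i _
      exact and_iff_left (hupper i)
    rw [heq]
    omega
  · have heq : (univ.filter fun i : Fin n =>
        -Real.sqrt (((n + 1) / 2 : ℕ) * ((n / 2 : ℕ) : ℝ)) ≤ lam i ∧ lam i ≤ 0) =
        univ.filter (fun i => lam i ≤ 0) := by
      apply Finset.filter_congr
      intro i _
      exact and_iff_right (hlower i)
    rw [heq]
    omega
end
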